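/- Let f₁ : ℝ^{d_x} → ℝ be μ_x-strongly convex (μ_x > 0) and differentiable, f₂ : ℝ^{d_x} → ℝ convex, g₁ : ℝ^{d_y} → ℝ convex and differentiable, g₂ : ℝ^{d_y} → ℝ convex, and B a real d_y×d_x matrix. Define ℒ(x, y) = f₁(x) + f₂(x) + ⟨y, Bx⟩ − g₁(y) − g₂(y), and assume φ(y) := g₁(y) + (f₁+f₂)^*(−Bᵀy) is μ_φ-strongly convex (μ_φ > 0), where (f₁+f₂)^*(z) = sup_x (⟨z, x⟩ − f₁(x) − f₂(x)). Let (x*, y*) be a saddle point of ℒ, i.e., ℒ(x*, y) ≤ ℒ(x*, y*) ≤ ℒ(x, y*) for all x, y. For any (x, y), set d_x(x,y) = inf{ ‖∇f₁(x) + Bᵀy + u‖ : u a subgradient of f₂ at x } and d_y(x,y) = inf{ ‖∇g₁(y) + w − Bx‖ : w a subgradient of g₂ at y }. Then for all (x, y): ‖y − y*‖ ≤ (1/μ_φ) d_y(x,y) + (σmax(B)/(μ_x μ_φ)) d_x(x,y), and ‖x − x*‖ ≤ (σmax(B)/(μ_x μ_φ)) d_y(x,y) + (1/μ_x + σmax(B)²/(μ_x²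 μ_φ)) d_x(x,y). -/

import Mathlib

open scoped RealInnerProductSpace
open Matrix

section AuxSaddle
open Filter

variable {E : Type*} [NormedAddCommGroup E] [InnerProductSpace ℝ E]

lemma convexOn_half_norm_sq (μ : ℝ) (hμ : 0 ≤ μ) :
    ConvexOn ℝ Set.univ (fun x : E => μ / 2 * ‖x‖ ^ 2) := by
  refine ⟨convex_univ, fun x _ y _ a b ha hb hab => ?_⟩
  simp only [smul_eq_mul]
  have e : ‖a • x + b • y‖ ^ 2 = a ^ 2 * ‖x‖ ^ 2 + 2 * (a * b) * ⟪x, y⟫ + b ^ 2 * ‖y‖ ^ 2 := by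
    rw [norm_add_sq_real, real_inner_smul_left, real_inner_smul_right, norm_smul, norm_smul]
    simp [abs_of_nonneg ha, abs_of_nonneg hb]
    ring
  have h1 : ‖a • x + b • y‖ ^ 2 ≤ a * ‖x‖ ^ 2 + b * ‖y‖ ^ 2 := by
    nlinarith [real_inner_le_norm x y, mul_nonneg ha hb, sq_nonneg (‖x‖ - ‖y‖)]
  nlinarith [norm_nonneg (a • x + b • y), sq_nonneg ‖a • x + b • y‖]

lemma convexOn_inner_right (v : E) : ConvexOn ℝ Set.univ (fun x : E => ⟪v, x⟫) := by
  refine ⟨convex_univ, fun x _ y _ a b ha hb hab => ?_⟩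
  simp [inner_add_right, real_inner_smul_right]

variable [FiniteDimensional ℝ E]

lemma exists_subgradient {f : E → ℝ} (hf : ConvexOn ℝ Set.univ f) (x : E) :
    ∃ u : E, ∀ z, f x + ⟪u, z - x⟫ ≤ f z := by
  have hc : Continuous f := hf.locallyLipschitz.continuous
  set s : Set (E × ℝ) := {p | f p.1 < p.2} with hs
  have hopen : IsOpen s := isOpen_lt (hc.comp continuous_fst) continuous_snd
  have hconv : Convex ℝ s := by
    intro p hp q hq a b ha hb hab
    simp only [hs, Set.mem_setOf_eq] at *
    have h0 : f (a • p.1 + b • q.1) ≤ a * f p.1 + b * f q.1 :=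
      hf.2 (Set.mem_univ _) (Set.mem_univ _) ha hb hab
    have hlt : a * f p.1 + b * f q.1 < a * p.2 + b * q.2 := by
      rcases eq_or_lt_of_le ha with h | h
      · have hb1 : b = 1 := by linarith
        rw [← h, hb1]; simpa using hq
      · have h1 : a * f p.1 < a * p.2 := by nlinarith
        have h2 : b * f q.1 ≤ b * q.2 := by nlinarith
        linarith
    calc f (a • p + b • q).1 = f (a • p.1 + b • q.1) := rfl
      _ ≤ a * f p.1 + b * f q.1 := h0
      _ < a * p.2 + b * q.2 := hlt
      _ = (a • p + b • q).2 := rfl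
  have hx : ((x, f x) : E × ℝ) ∉ s := by simp [hs]
  obtain ⟨ℓ, hℓ⟩ := geometric_hahn_banach_open_point hconv hopen hx
  set c : ℝ := ℓ (0, 1) with hcdef
  have hdecomp : ∀ (z : E) (t : ℝ), ℓ (z, t) = ℓ (z, 0) + t * c := by
    intro z t
    have he : ((z, t) : E × ℝ) = (z, (0 : ℝ)) + t • ((0 : E), (1 : ℝ)) := by
      simp [Prod.ext_iff]
    rw [he, map_add, _root_.map_smul, smul_eq_mul]
  have key : ∀ (z : E) (t : ℝ), f z < t → ℓ (z, 0) + t * c < ℓ (x, 0) + f x * c := by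
    intro z t ht
    have h1 := hℓ (z, t) ht
    rw [hdecomp z t, hdecomp x (f x)] at h1
    exact h1
  have hc0 : c < 0 := by
    have := key x (f x + 1) (by linarith)
    nlinarith
  have key2 : ∀ z : E, ℓ (z, 0) + f z * c ≤ ℓ (x, 0) + f x * c := by
    intro z
    refine le_of_forall_pos_le_add fun ε hε => ?_
    have hpos : 0 < ε / (-c) := div_pos hε (by linarith)
    have h1 := key z (f z + ε / (-c)) (by linarith)
    have hcne : c ≠ 0 := ne_of_lt hc0
    have h2 : ε / (-c) * c = -ε := by
      rw [div_mul_eq_mul_div, div_neg, mul_div_assoc, div_self hcne, mul_one]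
    nlinarith
  refine ⟨(-c)⁻¹ • ((InnerProductSpace.toDual ℝ E).symm
      (ℓ.comp (ContinuousLinearMap.inl ℝ E ℝ))), fun z => ?_⟩
  have hinner : ⟪(-c)⁻¹ • ((InnerProductSpace.toDual ℝ E).symm
      (ℓ.comp (ContinuousLinearMap.inl ℝ E ℝ))), z - x⟫
      = (-c)⁻¹ * (ℓ (z, 0) - ℓ (x, 0)) := by
    rw [real_inner_smul_left, InnerProductSpace.toDual_symm_apply]
    simp [ContinuousLinearMap.inl, ← map_sub]
  rw [hinner]
  have h3 := key2 z
  have hcpos : 0 < -c := by linarith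
  have h4 : (-c)⁻¹ * (ℓ (z, 0) - ℓ (x, 0)) ≤ f z - f x := by
    rw [inv_mul_le_iff₀ hcpos]
    nlinarith
  linarith

lemma grad_subgrad {f : E → ℝ} (hf : ConvexOn ℝ Set.univ f) (hd : Differentiable ℝ f)
    (a z : E) : f a + ⟪gradient f a, z - a⟫ ≤ f z := by
  set φ : ℝ → ℝ := fun t => f (a + t • (z - a)) with hφ
  have hline : HasDerivAt (fun t : ℝ => a + t • (z - a)) (z - a) 0 := by
    simpa using ((hasDerivAt_id (0 : ℝ)).smul_const (z - a)).const_add a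
  have hgrad : HasGradientAt f (gradient f a) a := (hd a).hasGradientAt
  have hfd : HasFDerivAt f (InnerProductSpace.toDual ℝ E (gradient f a)) a :=
    hasGradientAt_iff_hasFDerivAt.mp hgrad
  have hfd' : HasFDerivAt f (InnerProductSpace.toDual ℝ E (gradient f a))
      (a + (0 : ℝ) • (z - a)) := by simpa using hfd
  have hφd : HasDerivAt φ ⟪gradient f a, z - a⟫ 0 := by
    have := hfd'.comp_hasDerivAt (0 : ℝ) hline
    rw [InnerProductSpace.toDual_apply_apply] at this
    exact this
  have hslope : Tendsto (slope φ 0) (nhdsWithin 0 (Set.Ioi 0))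
      (nhds ⟪gradient f a, z - a⟫) := by
    have h1 := hasDerivAt_iff_tendsto_slope.mp hφd
    have h2 : nhdsWithin (0:ℝ) (Set.Ioi 0) ≤ nhdsWithin (0:ℝ) {(0:ℝ)}ᶜ :=
      nhdsWithin_mono 0 (fun t ht => ne_of_gt ht)
    exact h1.mono_left h2
  have hbound : ∀ᶠ t in nhdsWithin (0:ℝ) (Set.Ioi 0), slope φ 0 t ≤ f z - f a := by
    filter_upwards [Ioo_mem_nhdsGT_of_mem (by norm_num : (0:ℝ) ∈ Set.Ico 0 1)] with t ht
    have ht0 : 0 < t := ht.1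
    have ht1 : t < 1 := ht.2
    have hcc : f ((1 - t) • a + t • z) ≤ (1 - t) * f a + t * f z :=
      hf.2 (Set.mem_univ _) (Set.mem_univ _) (by linarith) ht0.le (by ring)
    have hpt : (1 - t) • a + t • z = a + t • (z - a) := by module
    rw [hpt] at hcc
    have hsl : slope φ 0 t = (φ t - φ 0) / t := by
      rw [slope_def_field]; ring_nf
    rw [hsl, div_le_iff₀ ht0]
    have hφt : φ t = f (a + t • (z - a)) := rfl
    have hφ0 : φ 0 = f a := by simp [hφ]
    nlinarith [hcc]
  have := le_of_tendsto hslope hbound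
  linarith

lemma strong_subgrad {f : E → ℝ} {μ : ℝ} (hμ : 0 ≤ μ)
    (hf : ConvexOn ℝ Set.univ (fun x => f x - μ / 2 * ‖x‖ ^ 2)) {a u : E}
    (hu : ∀ z, f a + ⟪u, z - a⟫ ≤ f z) (z : E) :
    f a + ⟪u, z - a⟫ + μ / 2 * ‖z - a‖ ^ 2 ≤ f z := by
  set C : ℝ := μ / 2 * ‖z - a‖ ^ 2 with hCdef
  have hCnn : 0 ≤ C := by positivity
  suffices h : C ≤ f z - f a - ⟪u, z - a⟫ by linarith
  have key : ∀ t : ℝ, 0 < t → t < 1 → (1 - t) * C ≤ f z - f a - ⟪u, z - a⟫ := by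
    intro t ht0 ht1
    have hcc := hf.2 (Set.mem_univ a) (Set.mem_univ z)
      (by linarith : (0:ℝ) ≤ 1 - t) ht0.le (by ring)
    simp only [smul_eq_mul] at hcc
    have hpt : (1 - t) • a + t • z = a + t • (z - a) := by module
    rw [hpt] at hcc
    have hsub := hu (a + t • (z - a))
    have hi1 : ⟪u, a + t • (z - a) - a⟫ = t * ⟪u, z - a⟫ := by
      rw [add_sub_cancel_left, real_inner_smul_right]
    rw [hi1] at hsub
    have hn : ‖a + t • (z - a)‖ ^ 2 = ‖a‖ ^ 2 + 2 * t * ⟪a, z - a⟫ + t ^ 2 * ‖z - a‖ ^ 2 := by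
      rw [norm_add_sq_real, real_inner_smul_right, norm_smul]
      simp [abs_of_pos ht0]
      ring
    have h1 : ‖z - a‖ ^ 2 = ‖z‖ ^ 2 - 2 * ⟪z, a⟫ + ‖a‖ ^ 2 := norm_sub_sq_real z a
    have h2 : ⟪a, z - a⟫ = ⟪z, a⟫ - ‖a‖ ^ 2 := by
      rw [inner_sub_right, real_inner_comm a z, real_inner_self_eq_norm_sq]
    have hbr : μ / 2 * ‖a + t • (z - a)‖ ^ 2 - (1 - t) * (μ / 2 * ‖a‖ ^ 2)
        - t * (μ / 2 * ‖z‖ ^ 2) = -(μ / 2) * (t * (1 - t)) * ‖z - a‖ ^ 2 := by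
      rw [hn, h2, h1]; ring
    have h3 : t * ((1 - t) * C) ≤ t * (f z - f a - ⟪u, z - a⟫) := by
      rw [hCdef]; nlinarith [hcc, hsub, hbr]
    exact le_of_mul_le_mul_left h3 ht0
  refine le_of_forall_pos_le_add fun ε hε => ?_
  set t : ℝ := min (1/2) (ε / (C + 1)) with htdef
  have ht0 : 0 < t := lt_min (by norm_num) (by positivity)
  have ht1 : t < 1 := lt_of_le_of_lt (min_le_left _ _) (by norm_num)
  have h4 := key t ht0 ht1
  have h5 : t * C ≤ ε := by
    have h6 : t ≤ ε / (C + 1) := min_le_right _ _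
    have h7 : t * C ≤ (ε / (C + 1)) * C := by nlinarith
    have h8 : (ε / (C + 1)) * C ≤ ε := by
      rw [div_mul_eq_mul_div, div_le_iff₀ (by linarith)]
      nlinarith
    linarith
  nlinarith

lemma dist_le_of_subgrad {f : E → ℝ} {μ : ℝ} (hμ : 0 < μ)
    (hf : ConvexOn ℝ Set.univ (fun x => f x - μ / 2 * ‖x‖ ^ 2)) {a b u : E}
    (hu : ∀ z, f a + ⟪u, z - a⟫ ≤ f z) (hb : ∀ z, f b ≤ f z) :
    μ * ‖a - b‖ ≤ ‖u‖ := by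
  have h1 := strong_subgrad hμ.le hf hu b
  have hb' : ∀ z, f b + ⟪(0 : E), z - b⟫ ≤ f z := by
    intro z; simpa using hb z
  have h2 := strong_subgrad hμ.le hf hb' a
  simp only [inner_zero_left, add_zero] at h2
  have e1 : ‖b - a‖ = ‖a - b‖ := norm_sub_rev b a
  have e2 : ⟪u, b - a⟫ = -⟪u, a - b⟫ := by
    rw [show b - a = -(a - b) by abel, inner_neg_right]
  rw [e1, e2] at h1
  have h3 : μ * ‖a - b‖ ^ 2 ≤ ⟪u, a - b⟫ := by linarith
  have h4 := real_inner_le_norm u (a - b)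
  rcases eq_or_lt_of_le (norm_nonneg (a - b)) with h | h
  · rw [← h, mul_zero]; exact norm_nonneg u
  · nlinarith

lemma exists_min [FiniteDimensional ℝ E] {f : E → ℝ} {μ : ℝ} (hμ : 0 < μ)
    (hf : ConvexOn ℝ Set.univ (fun x => f x - μ / 2 * ‖x‖ ^ 2)) (hc : Continuous f) :
    ∃ b, ∀ z, f b ≤ f z := by
  have hconv : ConvexOn ℝ Set.univ f := by
    have h := hf.add (convexOn_half_norm_sq (E := E) μ hμ.le)
    have he : (fun x => f x - μ / 2 * ‖x‖ ^ 2) + (fun x : E => μ / 2 * ‖x‖ ^ 2) = f := by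
      funext x; simp
    rwa [he] at h
  obtain ⟨u₀, hu₀⟩ := exists_subgradient hconv 0
  have lower : ∀ z : E, f 0 - ‖u₀‖ * ‖z‖ + μ / 2 * ‖z‖ ^ 2 ≤ f z := by
    intro z
    have h1 := strong_subgrad hμ.le hf hu₀ z
    have h2 : |⟪u₀, z - 0⟫| ≤ ‖u₀‖ * ‖z - 0‖ := abs_real_inner_le_norm u₀ (z - 0)
    simp only [sub_zero] at h1 h2
    have := abs_le.mp h2
    linarith [this.1]
  have tends : Tendsto f (cocompact E) atTop := by
    refine tendsto_atTop_mono' _ (Eventually.of_forall lower) ?_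
    have hnorm : Tendsto (fun z : E => ‖z‖) (cocompact E) atTop :=
      tendsto_norm_cocompact_atTop
    have hpoly : Tendsto (fun r : ℝ => f 0 - ‖u₀‖ * r + μ / 2 * r ^ 2) atTop atTop := by
      refine tendsto_atTop_mono' atTop ?_ (tendsto_atTop_add_const_right _ (f 0) tendsto_id)
      filter_upwards [eventually_ge_atTop (2 * (‖u₀‖ + 1) / μ), eventually_ge_atTop 0]
        with r h1 h2
      have h3 : 2 * (‖u₀‖ + 1) ≤ μ * r := by
        rw [div_le_iff₀ hμ] at h1; linarith
      simp only [id]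
      nlinarith
    exact hpoly.comp hnorm
  exact hc.exists_forall_le tends

end AuxSaddle

noncomputable def sigmaMax {p d : ℕ} (A : Matrix (Fin p) (Fin d) ℝ) : ℝ :=
  ‖LinearMap.toContinuousLinearMap (Matrix.toEuclideanLin A)‖

noncomputable def dxGap {dx dy : ℕ} (f₁ f₂ : EuclideanSpace ℝ (Fin dx) → ℝ)
    (B : Matrix (Fin dy) (Fin dx) ℝ)
    (x : EuclideanSpace ℝ (Fin dx)) (y : EuclideanSpace ℝ (Fin dy)) : ℝ :=
  sInf {c : ℝ | ∃ u : EuclideanSpace ℝ (Fin dx),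
    (∀ z, f₂ x + ⟪u, z - x⟫ ≤ f₂ z) ∧
    c = ‖gradient f₁ x + Matrix.toEuclideanLin Bᵀ y + u‖}

noncomputable def dyGap {dx dy : ℕ} (g₁ g₂ : EuclideanSpace ℝ (Fin dy) → ℝ)
    (B : Matrix (Fin dy) (Fin dx) ℝ)
    (x : EuclideanSpace ℝ (Fin dx)) (y : EuclideanSpace ℝ (Fin dy)) : ℝ :=
  sInf {c : ℝ | ∃ w : EuclideanSpace ℝ (Fin dy),
    (∀ z, g₂ y + ⟪w, z - y⟫ ≤ g₂ z) ∧
    c = ‖gradient g₁ y + w - Matrix.toEuclideanLin B x‖}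

set_option maxHeartbeats 1600000 in
/-- Error bound for the saddle-point problem
`ℒ(x,y) = f₁(x) + f₂(x) + ⟪y, Bx⟫ − g₁(y) − g₂(y)`: if `f₁` is `μ_x`-strongly convex
and differentiable, `f₂, g₂` convex, `g₁` convex differentiable, and the dual function
`φ(y) = g₁(y) + (f₁+f₂)^*(−Bᵀy)` is `μ_φ`-strongly convex, then for a saddle point
`(x*, y*)` and any `(x, y)`,
`‖y − y*‖ ≤ (1/μ_φ) d_y + (σmax(B)/(μ_x μ_φ)) d_x` and
`‖x − x*‖ ≤ (σmax(B)/(μ_x μ_φ)) d_y + (1/μ_x + σmax(B)²/(μ_x² μ_φ)) d_x`. -/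
theorem stmt8 {dx dy : ℕ} (μx μφ : ℝ) (hμx : 0 < μx) (hμφ : 0 < μφ)
    (f₁ f₂ : EuclideanSpace ℝ (Fin dx) → ℝ)
    (hf₁sc : ConvexOn ℝ Set.univ (fun x => f₁ x - μx / 2 * ‖x‖ ^ 2))
    (hf₁d : Differentiable ℝ f₁)
    (hf₂ : ConvexOn ℝ Set.univ f₂)
    (g₁ g₂ : EuclideanSpace ℝ (Fin dy) → ℝ)
    (hg₁ : ConvexOn ℝ Set.univ g₁) (hg₁d : Differentiable ℝ g₁)
    (hg₂ : ConvexOn ℝ Set.univ g₂)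
    (B : Matrix (Fin dy) (Fin dx) ℝ)
    (L : EuclideanSpace ℝ (Fin dx) → EuclideanSpace ℝ (Fin dy) → ℝ)
    (hL : ∀ x y, L x y = f₁ x + f₂ x + ⟪y, Matrix.toEuclideanLin B x⟫ - g₁ y - g₂ y)
    (conj : EuclideanSpace ℝ (Fin dx) → ℝ)
    (hconj : ∀ z, conj z = ⨆ x : EuclideanSpace ℝ (Fin dx), (⟪z, x⟫ - f₁ x - f₂ x))
    (φ : EuclideanSpace ℝ (Fin dy) → ℝ)
    (hφ : ∀ y, φ y = g₁ y + conj (-(Matrix.toEuclideanLin Bᵀ y)))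
    (hφsc : ConvexOn ℝ Set.univ (fun y => φ y - μφ / 2 * ‖y‖ ^ 2))
    (xstar : EuclideanSpace ℝ (Fin dx)) (ystar : EuclideanSpace ℝ (Fin dy))
    (hsaddle₁ : ∀ y, L xstar y ≤ L xstar ystar)
    (hsaddle₂ : ∀ x, L xstar ystar ≤ L x ystar) :
    ∀ (x : EuclideanSpace ℝ (Fin dx)) (y : EuclideanSpace ℝ (Fin dy)),
      ‖y - ystar‖ ≤ (1 / μφ) * dyGap g₁ g₂ B x y
          + sigmaMax B / (μx * μφ) * dxGap f₁ f₂ B x y ∧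
      ‖x - xstar‖ ≤ sigmaMax B / (μx * μφ) * dyGap g₁ g₂ B x y
          + (1 / μx + sigmaMax B ^ 2 / (μx ^ 2 * μφ)) * dxGap f₁ f₂ B x y := by
  intro x y
  set σ : ℝ := sigmaMax B with hσdef
  have hσ : 0 ≤ σ := norm_nonneg _
  set Bl : EuclideanSpace ℝ (Fin dx) →ₗ[ℝ] EuclideanSpace ℝ (Fin dy) :=
    Matrix.toEuclideanLin B with hBldef
  set BT : EuclideanSpace ℝ (Fin dy) →ₗ[ℝ] EuclideanSpace ℝ (Fin dx) :=
    Matrix.toEuclideanLin Bᵀ with hBTdef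
  have adj : ∀ (x' : EuclideanSpace ℝ (Fin dx)) (y' : EuclideanSpace ℝ (Fin dy)),
      ⟪BT y', x'⟫ = ⟪y', Bl x'⟫ := by
    intro x' y'
    rw [hBTdef, hBldef, show Bᵀ = B.conjTranspose by ext i j; simp [Matrix.conjTranspose],
      Matrix.toEuclideanLin_conjTranspose_eq_adjoint, LinearMap.adjoint_inner_left]
  have hBl : ∀ v, ‖Bl v‖ ≤ σ * ‖v‖ := by
    intro v
    rw [hσdef, hBldef]
    simpa [sigmaMax] using (LinearMap.toContinuousLinearMap (Matrix.toEuclideanLin B)).le_opNorm v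
  have hBT : ∀ w, ‖BT w‖ ≤ σ * ‖w‖ := by
    intro w
    have h1 : ‖BT w‖ ^ 2 = ⟪BT w, BT w⟫ := (real_inner_self_eq_norm_sq _).symm
    have h2 : ⟪BT w, BT w⟫ = ⟪w, Bl (BT w)⟫ := adj _ _
    have h3 : ⟪w, Bl (BT w)⟫ ≤ ‖w‖ * ‖Bl (BT w)‖ := real_inner_le_norm _ _
    have h4 := hBl (BT w)
    rcases eq_or_lt_of_le (norm_nonneg (BT w)) with h | h
    · rw [← h]; positivity
    · nlinarith [norm_nonneg w]
  set hfun : EuclideanSpace ℝ (Fin dy) → EuclideanSpace ℝ (Fin dx) → ℝ :=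
    fun y' x' => f₁ x' + f₂ x' + ⟪BT y', x'⟫ with hfundef
  have hLh : ∀ x' y', L x' y' = hfun y' x' - g₁ y' - g₂ y' := by
    intro x' y'
    rw [hL, hfundef]
    simp only
    rw [adj]
  have hstrong : ∀ y', ConvexOn ℝ Set.univ (fun x' => hfun y' x' - μx / 2 * ‖x'‖ ^ 2) := by
    intro y'
    have h := (hf₁sc.add hf₂).add (convexOn_inner_right (BT y'))
    have he : ((fun x' => f₁ x' - μx / 2 * ‖x'‖ ^ 2) + f₂) + (fun x' => ⟪BT y', x'⟫)
        = fun x' => hfun y' x' - μx / 2 * ‖x'‖ ^ 2 := by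
      funext x'; simp [hfundef]; ring
    rwa [he] at h
  have hcont : ∀ y', Continuous (fun x' => hfun y' x') := by
    intro y'
    exact ((hf₁d.continuous.add hf₂.locallyLipschitz.continuous).add
      (continuous_const.inner continuous_id))
  have hminexists : ∀ y', ∃ xh, ∀ z, hfun y' xh ≤ hfun y' z :=
    fun y' => exists_min hμx (hstrong y') (hcont y')
  choose xh hxh using hminexists
  have hterm : ∀ (y' : EuclideanSpace ℝ (Fin dy)) (x' : EuclideanSpace ℝ (Fin dx)),
      ⟪-(BT y'), x'⟫ - f₁ x' - f₂ x' = -(hfun y' x') := by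
    intro y' x'; simp [hfundef, inner_neg_left]; ring
  have hconjval : ∀ y', conj (-(BT y')) = -(hfun y' (xh y')) := by
    intro y'
    rw [hconj]
    apply le_antisymm
    · apply ciSup_le
      intro x'
      rw [hterm]
      have := hxh y' x'
      linarith
    · have hb : BddAbove (Set.range fun x' => ⟪-(BT y'), x'⟫ - f₁ x' - f₂ x') := by
        refine ⟨-(hfun y' (xh y')), ?_⟩
        rintro _ ⟨x', rfl⟩
        dsimp only
        rw [hterm]
        have := hxh y' x'
        linarith
      have h2 := le_ciSup hb (xh y')
      calc -(hfun y' (xh y')) = ⟪-(BT y'), xh y'⟫ - f₁ (xh y') - f₂ (xh y') :=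
            (hterm y' (xh y')).symm
        _ ≤ _ := h2
  set D : EuclideanSpace ℝ (Fin dy) → ℝ :=
    fun y' => g₁ y' + g₂ y' + conj (-(BT y')) with hDdef
  have hDstrong : ConvexOn ℝ Set.univ (fun y' => D y' - μφ / 2 * ‖y'‖ ^ 2) := by
    have h := hφsc.add hg₂
    have he : ((fun y' => φ y' - μφ / 2 * ‖y'‖ ^ 2) + g₂)
        = fun y' => D y' - μφ / 2 * ‖y'‖ ^ 2 := by
      funext y'; simp [hDdef, hφ y', ← hBTdef]; ring
    rwa [he] at h
  have hminstar : ∀ z, hfun ystar xstar ≤ hfun ystar z := by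
    intro z
    have h := hsaddle₂ z
    rw [hLh, hLh] at h
    linarith
  have hDmin : ∀ z, D ystar ≤ D z := by
    intro z
    have h1 : conj (-(BT ystar)) = -(hfun ystar (xh ystar)) := hconjval ystar
    have heq : hfun ystar (xh ystar) = hfun ystar xstar :=
      le_antisymm (hxh ystar xstar) (hminstar (xh ystar))
    have h2 : conj (-(BT z)) = -(hfun z (xh z)) := hconjval z
    have h3 : hfun z (xh z) ≤ hfun z xstar := hxh z xstar
    have h4 := hsaddle₁ z
    rw [hLh, hLh] at h4
    simp only [hDdef]
    rw [h1, h2, heq]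
    linarith
  -- the key claim for explicit subgradients
  have claim : ∀ u : EuclideanSpace ℝ (Fin dx), (∀ z, f₂ x + ⟪u, z - x⟫ ≤ f₂ z) →
      ∀ w : EuclideanSpace ℝ (Fin dy), (∀ z, g₂ y + ⟪w, z - y⟫ ≤ g₂ z) →
      (‖y - ystar‖ ≤ 1 / μφ * ‖gradient g₁ y + w - Bl x‖
          + σ / (μx * μφ) * ‖gradient f₁ x + BT y + u‖ ∧
        ‖x - xstar‖ ≤ σ / (μx * μφ) * ‖gradient g₁ y + w - Bl x‖
          + (1 / μx + σ ^ 2 / (μx ^ 2 * μφ)) * ‖gradient f₁ x + BT y + u‖) := by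
    intro u hu w hw
    set vx : EuclideanSpace ℝ (Fin dx) := gradient f₁ x + BT y + u with hvx
    set vy : EuclideanSpace ℝ (Fin dy) := gradient g₁ y + w - Bl x with hvy
    have hconvf₁ : ConvexOn ℝ Set.univ f₁ := by
      have h := hf₁sc.add (convexOn_half_norm_sq μx hμx.le)
      have he : ((fun x' => f₁ x' - μx / 2 * ‖x'‖ ^ 2)
          + fun x' : EuclideanSpace ℝ (Fin dx) => μx / 2 * ‖x'‖ ^ 2) = f₁ := by
        funext x'; simp
      rwa [he] at h
    have hsubx : ∀ z, hfun y x + ⟪vx, z - x⟫ ≤ hfun y z := by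
      intro z
      have h1 := grad_subgrad hconvf₁ hf₁d x z
      have h2 := hu z
      have h3 : ⟪BT y, z - x⟫ = ⟪BT y, z⟫ - ⟪BT y, x⟫ := inner_sub_right _ _ _
      have h4 : ⟪vx, z - x⟫ = ⟪gradient f₁ x, z - x⟫ + ⟪BT y, z - x⟫ + ⟪u, z - x⟫ := by
        rw [hvx, inner_add_left, inner_add_left]
      simp only [hfundef]
      linarith
    have dist1 : μx * ‖x - xh y‖ ≤ ‖vx‖ := dist_le_of_subgrad hμx (hstrong y) hsubx (hxh y)
    have hsub2 : ∀ z, hfun ystar (xh y) + ⟪BT (ystar - y), z - xh y⟫ ≤ hfun ystar z := by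
      intro z
      have h1 := hxh y z
      have e : ∀ x', hfun ystar x' = hfun y x' + ⟪BT (ystar - y), x'⟫ := by
        intro x'
        simp only [hfundef]
        rw [map_sub, inner_sub_left]
        ring
      rw [e z, e (xh y), inner_sub_right]
      linarith
    have dist2 : μx * ‖xh y - xstar‖ ≤ σ * ‖y - ystar‖ := by
      have h := dist_le_of_subgrad hμx (hstrong ystar) hsub2 hminstar
      have h2 := hBT (ystar - y)
      rw [norm_sub_rev] at h2
      linarith
    set vD : EuclideanSpace ℝ (Fin dy) := gradient g₁ y + w - Bl (xh y) with hvD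
    have hsubD : ∀ z, D y + ⟪vD, z - y⟫ ≤ D z := by
      intro z
      have h1 := grad_subgrad hg₁ hg₁d y z
      have h2 := hw z
      have h3 : conj (-(BT y)) + ⟪-(Bl (xh y)), z - y⟫ ≤ conj (-(BT z)) := by
        rw [hconjval z, hconjval y]
        have h4 : hfun z (xh z) ≤ hfun z (xh y) := hxh z (xh y)
        have h5 : hfun z (xh y) = hfun y (xh y) + ⟪BT (z - y), xh y⟫ := by
          simp only [hfundef]
          rw [map_sub, inner_sub_left]
          ring
        have h6 : ⟪BT (z - y), xh y⟫ = ⟪z - y, Bl (xh y)⟫ := adj _ _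
        have h7 : ⟪-(Bl (xh y)), z - y⟫ = -⟪z - y, Bl (xh y)⟫ := by
          rw [inner_neg_left, real_inner_comm]
        linarith
      have h8 : ⟪vD, z - y⟫ = ⟪gradient g₁ y, z - y⟫ + ⟪w, z - y⟫ + ⟪-(Bl (xh y)), z - y⟫ := by
        rw [hvD, sub_eq_add_neg, inner_add_left, inner_add_left]
      simp only [hDdef]
      linarith
    have dist3 : μφ * ‖y - ystar‖ ≤ ‖vD‖ := dist_le_of_subgrad hμφ hDstrong hsubD hDmin
    have hvDnorm : ‖vD‖ ≤ ‖vy‖ + σ * ‖x - xh y‖ := by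
      have e : vD = vy + Bl (x - xh y) := by
        rw [hvD, hvy, map_sub]
        abel
      rw [e]
      exact le_trans (norm_add_le _ _) (by linarith [hBl (x - xh y)])
    have hbound1 : μφ * ‖y - ystar‖ ≤ ‖vy‖ + σ * (‖vx‖ / μx) := by
      have h9 : σ * ‖x - xh y‖ ≤ σ * (‖vx‖ / μx) := by
        apply mul_le_mul_of_nonneg_left _ hσ
        rw [le_div_iff₀ hμx]
        linarith [dist1]
      linarith [dist3, hvDnorm]
    constructor
    · rw [show (1 : ℝ) / μφ * ‖vy‖ + σ / (μx * μφ) * ‖vx‖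
          = (‖vy‖ + σ * (‖vx‖ / μx)) / μφ by field_simp]
      rw [le_div_iff₀ hμφ]
      linarith [hbound1]
    · have htri : ‖x - xstar‖ ≤ ‖x - xh y‖ + ‖xh y - xstar‖ := by
        rw [show x - xstar = (x - xh y) + (xh y - xstar) by abel]
        exact norm_add_le _ _
      have h10 : ‖x - xh y‖ ≤ ‖vx‖ / μx := by
        rw [le_div_iff₀ hμx]
        linarith [dist1]
      have h11 : ‖xh y - xstar‖ ≤ σ / μx * ‖y - ystar‖ := by
        rw [div_mul_eq_mul_div, le_div_iff₀ hμx]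
        linarith [dist2]
      have h12 : ‖y - ystar‖ ≤ (‖vy‖ + σ * (‖vx‖ / μx)) / μφ := by
        rw [le_div_iff₀ hμφ]
        linarith [hbound1]
      have h13 : σ / μx * ‖y - ystar‖ ≤ σ / μx * ((‖vy‖ + σ * (‖vx‖ / μx)) / μφ) :=
        mul_le_mul_of_nonneg_left h12 (div_nonneg hσ hμx.le)
      have h14 : ‖vx‖ / μx + σ / μx * ((‖vy‖ + σ * (‖vx‖ / μx)) / μφ)
          = σ / (μx * μφ) * ‖vy‖ + (1 / μx + σ ^ 2 / (μx ^ 2 * μφ)) * ‖vx‖ := by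
        field_simp
        ring
      linarith [htri, h10, h11, h13, h14.le, h14.ge]
  -- pass to the infimum
  obtain ⟨u₀, hu₀⟩ := exists_subgradient hf₂ x
  obtain ⟨w₀, hw₀⟩ := exists_subgradient hg₂ y
  have hdxv : dxGap f₁ f₂ B x y = sInf {c : ℝ | ∃ u : EuclideanSpace ℝ (Fin dx),
      (∀ z, f₂ x + ⟪u, z - x⟫ ≤ f₂ z) ∧ c = ‖gradient f₁ x + BT y + u‖} := by
    rw [hBTdef]; rfl
  have hdyv : dyGap g₁ g₂ B x y = sInf {c : ℝ | ∃ w : EuclideanSpace ℝ (Fin dy),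
      (∀ z, g₂ y + ⟪w, z - y⟫ ≤ g₂ z) ∧ c = ‖gradient g₁ y + w - Bl x‖} := by
    rw [hBldef]; rfl
  set Sx : Set ℝ := {c : ℝ | ∃ u : EuclideanSpace ℝ (Fin dx),
      (∀ z, f₂ x + ⟪u, z - x⟫ ≤ f₂ z) ∧ c = ‖gradient f₁ x + BT y + u‖} with hSx
  set Sy : Set ℝ := {c : ℝ | ∃ w : EuclideanSpace ℝ (Fin dy),
      (∀ z, g₂ y + ⟪w, z - y⟫ ≤ g₂ z) ∧ c = ‖gradient g₁ y + w - Bl x‖} with hSy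
  have hSxne : Sx.Nonempty := ⟨_, u₀, hu₀, rfl⟩
  have hSyne : Sy.Nonempty := ⟨_, w₀, hw₀, rfl⟩
  have hSxbdd : BddBelow Sx := ⟨0, by rintro c ⟨u, hu, rfl⟩; positivity⟩
  have hSybdd : BddBelow Sy := ⟨0, by rintro c ⟨w, hw, rfl⟩; positivity⟩
  rw [hdxv, hdyv]
  constructor
  · refine le_of_forall_pos_le_add fun ε hε => ?_
    set K : ℝ := 1 / μφ + σ / (μx * μφ) + 1 with hK
    have hK0 : 0 < K := by positivity
    have hεK : 0 < ε / K := by positivity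
    obtain ⟨cx, ⟨u, hu, hcx⟩, hcxlt⟩ := Real.lt_sInf_add_pos hSxne hεK
    obtain ⟨cy, ⟨w, hw, hcy⟩, hcylt⟩ := Real.lt_sInf_add_pos hSyne hεK
    have hcl := (claim u hu w hw).1
    rw [← hcx, ← hcy] at hcl
    have hc1 : 1 / μφ * cy ≤ 1 / μφ * (sInf Sy + ε / K) :=
      mul_le_mul_of_nonneg_left hcylt.le (by positivity)
    have hc2 : σ / (μx * μφ) * cx ≤ σ / (μx * μφ) * (sInf Sx + ε / K) :=
      mul_le_mul_of_nonneg_left hcxlt.le (div_nonneg hσ (by positivity))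
    have hc3 : (1 / μφ + σ / (μx * μφ)) * (ε / K) ≤ ε := by
      have h1 : 1 / μφ + σ / (μx * μφ) ≤ K := by rw [hK]; linarith
      have h2 : (1 / μφ + σ / (μx * μφ)) * (ε / K) ≤ K * (ε / K) :=
        mul_le_mul_of_nonneg_right h1 hεK.le
      have h3 : K * (ε / K) = ε := by field_simp
      linarith
    nlinarith [hcl, hc1, hc2, hc3]
  · refine le_of_forall_pos_le_add fun ε hε => ?_
    set K : ℝ := σ / (μx * μφ) + (1 / μx + σ ^ 2 / (μx ^ 2 * μφ)) + 1 with hK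
    have hK0 : 0 < K := by positivity
    have hεK : 0 < ε / K := by positivity
    obtain ⟨cx, ⟨u, hu, hcx⟩, hcxlt⟩ := Real.lt_sInf_add_pos hSxne hεK
    obtain ⟨cy, ⟨w, hw, hcy⟩, hcylt⟩ := Real.lt_sInf_add_pos hSyne hεK
    have hcl := (claim u hu w hw).2
    rw [← hcx, ← hcy] at hcl
    have hA : (0:ℝ) ≤ σ / (μx * μφ) := div_nonneg hσ (by positivity)
    have hB : (0:ℝ) ≤ 1 / μx + σ ^ 2 / (μx ^ 2 * μφ) := by positivity
    have hc1 : σ / (μx * μφ) * cy ≤ σ / (μx * μφ) * (sInf Sy + ε / K) :=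
      mul_le_mul_of_nonneg_left hcylt.le hA
    have hc2 : (1 / μx + σ ^ 2 / (μx ^ 2 * μφ)) * cx
        ≤ (1 / μx + σ ^ 2 / (μx ^ 2 * μφ)) * (sInf Sx + ε / K) :=
      mul_le_mul_of_nonneg_left hcxlt.le hB
    have hc3 : (σ / (μx * μφ) + (1 / μx + σ ^ 2 / (μx ^ 2 * μφ))) * (ε / K) ≤ ε := by
      have h1 : σ / (μx * μφ) + (1 / μx + σ ^ 2 / (μx ^ 2 * μφ)) ≤ K := by rw [hK]; linarith
      have h2 : (σ / (μx * μφ) + (1 / μx + σ ^ 2 / (μx ^ 2 * μφ))) * (ε / K) ≤ K * (ε / K) :=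
        mul_le_mul_of_nonneg_right h1 hεK.le
      have h3 : K * (ε / K) = ε := by field_simp
      linarith
    nlinarith [hcl, hc1, hc2, hc3]
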